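/- The function G defined by G(y) = ∫₀^∞ exp((α−1) ∫₀^{s₁} F_r(Φ^{-s₂}(y)) ds₂) ds₁ is continuous on any compact flow-invariant set A on which F_r ≥ F_m > 0. -/

import Mathlib

open Real MeasureTheory intervalIntegral Set

/-- Continuity of the graph function `G` on a compact invariant set `A` on which
`F_r ≥ F_m > 0`, where `G(y) = ∫₀^∞ exp((α−1)∫₀^{s₁} F_r(Φ^{-s₂} y) ds₂) ds₁`. -/
theorem stmt_7 {d : ℕ} (α : ℝ) (hα : α < 1)
    (Φ : ℝ → EuclideanSpace ℝ (Fin d) → EuclideanSpace ℝ (Fin d))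
    (hΦcont : Continuous fun p : ℝ × EuclideanSpace ℝ (Fin d) => Φ p.1 p.2)
    (Fr : EuclideanSpace ℝ (Fin d) → ℝ) (hFr : Continuous Fr)
    (A : Set (EuclideanSpace ℝ (Fin d))) (hA : IsCompact A)
    (hinv : ∀ s : ℝ, ∀ y ∈ A, Φ s y ∈ A)
    (Fm : ℝ) (hFm : 0 < Fm) (hlow : ∀ y ∈ A, Fm ≤ Fr y) :
    ContinuousOn
      (fun y => ∫ s₁ in Ici (0:ℝ),
        Real.exp ((α - 1) * ∫ s₂ in (0:ℝ)..s₁, Fr (Φ (-s₂) y)))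
      A := by
  have hcpos : 0 < (1 - α) * Fm := mul_pos (by linarith) hFm
  -- joint continuity of the inner integral in (y, s₁)
  have hfrcont : Continuous fun p : EuclideanSpace ℝ (Fin d) × ℝ => Fr (Φ (-p.2) p.1) := by
    fun_prop
  have hjoint : Continuous (fun p : EuclideanSpace ℝ (Fin d) × ℝ =>
      ∫ s₂ in (0:ℝ)..p.2, Fr (Φ (-s₂) p.1)) := by
    apply continuous_parametric_intervalIntegral_of_continuous
      (f := fun (p : EuclideanSpace ℝ (Fin d) × ℝ) s₂ => Fr (Φ (-s₂) p.1))
      (s := fun p => p.2)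
    · show Continuous fun q : (EuclideanSpace ℝ (Fin d) × ℝ) × ℝ => Fr (Φ (-q.2) q.1.1)
      fun_prop
    · exact continuous_snd
  have hGcont : Continuous (fun p : EuclideanSpace ℝ (Fin d) × ℝ =>
      Real.exp ((α - 1) * ∫ s₂ in (0:ℝ)..p.2, Fr (Φ (-s₂) p.1))) :=
    Real.continuous_exp.comp (continuous_const.mul hjoint)
  apply continuousOn_of_dominated (bound := fun s => Real.exp (-((1 - α) * Fm) * s))
  · intro y _
    exact ((hGcont.comp (Continuous.prodMk_right y)).aestronglyMeasurable).restrict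
  · intro y hy
    filter_upwards [ae_restrict_mem measurableSet_Ici] with s hs
    have hmono : Fm * s ≤ ∫ s₂ in (0:ℝ)..s, Fr (Φ (-s₂) y) := by
      have h1 : IntervalIntegrable (fun _ : ℝ => Fm) volume 0 s := intervalIntegrable_const
      have h2 : IntervalIntegrable (fun s₂ => Fr (Φ (-s₂) y)) volume 0 s :=
        (hfrcont.comp (Continuous.prodMk_right y)).intervalIntegrable 0 s
      have := intervalIntegral.integral_mono_on (μ := volume) hs h1 h2
        (fun u _ => hlow _ (hinv (-u) y hy))
      simpa [mul_comm] using this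
    have hle : (α - 1) * ∫ s₂ in (0:ℝ)..s, Fr (Φ (-s₂) y) ≤ -((1 - α) * Fm) * s := by
      nlinarith
    rw [Real.norm_eq_abs, abs_of_pos (Real.exp_pos _)]
    exact Real.exp_le_exp.mpr hle
  · exact Iff.mpr integrableOn_Ici_iff_integrableOn_Ioi (exp_neg_integrableOn_Ioi 0 hcpos)
  · filter_upwards with s
    exact (hGcont.comp (continuous_id.prodMk continuous_const)).continuousOn
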